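/- Every realizable separator sequence is realized by a nested (laminar) family of mentions: for any finite set M of intervals over {1,…,n}, there exists a set M' of intervals with the same separator sequence as M such that any two intervals of M' are either disjoint or one contains the other. -/

import Mathlib

inductive Marker | S | E | C
deriving DecidableEq

/-- Separator sequence of a set of mentions (intervals). Gap `k` lies between word `k` and word `k+1`. -/
def sep (M : Set (ℕ × ℕ)) (k : ℕ) : Set Marker :=
  {m | (m = Marker.S ∧ ∃ p ∈ M, p.1 = k + 1) ∨
       (m = Marker.E ∧ ∃ p ∈ M, p.2 = k) ∨
       (m = Marker.C ∧ ∃ p ∈ M, p.1 ≤ k ∧ k + 1 ≤ p.2)}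

/-- `M` is a set of mentions over a sentence of `n` words. -/
def Valid (n : ℕ) (M : Set (ℕ × ℕ)) : Prop :=
  ∀ p ∈ M, 1 ≤ p.1 ∧ p.1 ≤ p.2 ∧ p.2 ≤ n
def Phi (F : Finset (ℕ × ℕ)) : ℕ := F.sum (fun r => (r.2 - r.1)^2)

lemma phi_le {n : ℕ} {F : Finset (ℕ × ℕ)} (h : Valid n ↑F) : Phi F ≤ F.card * n^2 := by
  have := Finset.sum_le_card_nsmul F (fun r => (r.2 - r.1)^2) (n^2) ?_
  · simpa [Phi] using this
  · intro r hr
    have hb := h r (by simpa using hr)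
    have hle : r.2 - r.1 ≤ n := by omega
    exact Nat.pow_le_pow_left hle 2

lemma sep_swap {M : Set (ℕ × ℕ)} {p q : ℕ × ℕ} (hp : p ∈ M) (hq : q ∈ M)
    (h1 : p.1 < q.1) (h2 : q.1 ≤ p.2) (h3 : p.2 < q.2) :
    sep (insert (p.1, q.2) (insert (q.1, p.2) (M \ {p, q}))) = sep M := by
  funext k
  have hS : (∃ r ∈ insert (p.1, q.2) (insert (q.1, p.2) (M \ {p, q})), r.1 = k + 1) ↔
      (∃ r ∈ M, r.1 = k + 1) := by
    constructor
    · rintro ⟨r, hr, hrk⟩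
      simp only [Set.mem_insert_iff, Set.mem_diff, Set.mem_singleton_iff] at hr
      rcases hr with rfl | rfl | ⟨hrM, -⟩
      · exact ⟨p, hp, hrk⟩
      · exact ⟨q, hq, hrk⟩
      · exact ⟨r, hrM, hrk⟩
    · rintro ⟨r, hr, hrk⟩
      by_cases hrp : r = p
      · subst hrp; exact ⟨(r.1, q.2), Set.mem_insert _ _, hrk⟩
      by_cases hrq : r = q
      · subst hrq; exact ⟨(r.1, p.2), by simp, hrk⟩
      · exact ⟨r, by simp [hrp, hrq, hr], hrk⟩
  have hE : (∃ r ∈ insert (p.1, q.2) (insert (q.1, p.2) (M \ {p, q})), r.2 = k) ↔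
      (∃ r ∈ M, r.2 = k) := by
    constructor
    · rintro ⟨r, hr, hrk⟩
      simp only [Set.mem_insert_iff, Set.mem_diff, Set.mem_singleton_iff] at hr
      rcases hr with rfl | rfl | ⟨hrM, -⟩
      · exact ⟨q, hq, hrk⟩
      · exact ⟨p, hp, hrk⟩
      · exact ⟨r, hrM, hrk⟩
    · rintro ⟨r, hr, hrk⟩
      by_cases hrp : r = p
      · subst hrp; exact ⟨(q.1, r.2), by simp, hrk⟩
      by_cases hrq : r = q
      · subst hrq; exact ⟨(p.1, r.2), Set.mem_insert _ _, hrk⟩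
      · exact ⟨r, by simp [hrp, hrq, hr], hrk⟩
  have hC : (∃ r ∈ insert (p.1, q.2) (insert (q.1, p.2) (M \ {p, q})), r.1 ≤ k ∧ k + 1 ≤ r.2) ↔
      (∃ r ∈ M, r.1 ≤ k ∧ k + 1 ≤ r.2) := by
    constructor
    · rintro ⟨r, hr, hrk⟩
      simp only [Set.mem_insert_iff, Set.mem_diff, Set.mem_singleton_iff] at hr
      rcases hr with rfl | rfl | ⟨hrM, -⟩
      · simp only at hrk
        by_cases hk : k + 1 ≤ p.2
        · exact ⟨p, hp, hrk.1, hk⟩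
        · exact ⟨q, hq, by omega, hrk.2⟩
      · simp only at hrk
        exact ⟨p, hp, by omega, hrk.2⟩
      · exact ⟨r, hrM, hrk⟩
    · rintro ⟨r, hr, hrk⟩
      by_cases hrp : r = p
      · subst hrp; exact ⟨(r.1, q.2), Set.mem_insert _ _, hrk.1, by omega⟩
      by_cases hrq : r = q
      · subst hrq; exact ⟨(p.1, r.2), Set.mem_insert _ _, by simp; omega⟩
      · exact ⟨r, by simp [hrp, hrq, hr], hrk⟩
  ext m
  simp only [sep, Set.mem_setOf_eq, hS, hE, hC]

lemma sq_cross (a b c : ℕ) (ha : 0 < a) (hc : 0 < c) :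
    (a+b)^2 + (b+c)^2 < (a+b+c)^2 + b^2 := by nlinarith

lemma step {n : ℕ} (F : Finset (ℕ × ℕ)) (hF : Valid n ↑F)
    {p q : ℕ × ℕ} (hp : p ∈ F) (hq : q ∈ F)
    (h1 : p.1 < q.1) (h2 : q.1 ≤ p.2) (h3 : p.2 < q.2) :
    ∃ F' : Finset (ℕ × ℕ), Valid n ↑F' ∧ sep ↑F' = sep ↑F ∧
      F'.card * (2*n^2+1) - Phi F' < F.card * (2*n^2+1) - Phi F := by
  have hpb := hF p (by simpa using hp)
  have hqb := hF q (by simpa using hq)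
  set P : ℕ × ℕ := (p.1, q.2) with hPdef
  set Q : ℕ × ℕ := (q.1, p.2) with hQdef
  have hPQ : P ≠ Q := by simp only [hPdef, hQdef, Prod.mk.injEq, ne_eq, not_and]; omega
  have hPp : P ≠ p := by
    simp only [hPdef, ne_eq, Prod.ext_iff, not_and]; intro _; omega
  have hPq : P ≠ q := by
    simp only [hPdef, ne_eq, Prod.ext_iff, not_and]; intro h; omega
  have hQp : Q ≠ p := by
    simp only [hQdef, ne_eq, Prod.ext_iff, not_and]; intro h; omega
  have hQq : Q ≠ q := by
    simp only [hQdef, ne_eq, Prod.ext_iff, not_and]; intro _; omega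
  have hpq : p ≠ q := by
    intro h; rw [h] at h1; omega
  set G := (F.erase p).erase q with hGdef
  have hqG : q ∈ F.erase p := Finset.mem_erase.mpr ⟨Ne.symm hpq, hq⟩
  have hGsub : G ⊆ F := fun r hr =>
    Finset.mem_of_mem_erase (Finset.mem_of_mem_erase hr)
  have hGmem : ∀ r : ℕ × ℕ, r ∈ G ↔ (r ∈ F ∧ r ≠ p ∧ r ≠ q) := by
    intro r
    simp only [hGdef, Finset.mem_erase]
    tauto
  have hF'v : Valid n ↑(insert P (insert Q G)) := by
    intro r hr
    simp only [Finset.coe_insert, Set.mem_insert_iff, Finset.mem_coe] at hr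
    rcases hr with rfl | rfl | hr
    · simp only [hPdef]; constructor <;> [omega; constructor <;> omega]
    · simp only [hQdef]; constructor <;> [omega; constructor <;> omega]
    · exact hF r (by simpa using hGsub hr)
  refine ⟨insert P (insert Q G), hF'v, ?_, ?_⟩
  · -- sep equality
    have hcoe : (↑(insert P (insert Q G)) : Set (ℕ × ℕ)) =
        insert P (insert Q ((↑F : Set (ℕ × ℕ)) \ {p, q})) := by
      ext r
      simp only [Finset.coe_insert, Set.mem_insert_iff, Finset.mem_coe, hGmem,
        Set.mem_diff, Set.mem_insert_iff, Set.mem_singleton_iff, ne_eq]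
      tauto
    rw [hcoe]
    exact sep_swap (by simpa using hp) (by simpa using hq) h1 h2 h3
  · -- measure decrease
    have hcardG : G.card + 2 = F.card := by
      have e1 : (F.erase p).card = F.card - 1 := Finset.card_erase_of_mem hp
      have e2 : G.card = (F.erase p).card - 1 := Finset.card_erase_of_mem hqG
      have e3 : 1 ≤ (F.erase p).card := Finset.card_pos.mpr ⟨q, hqG⟩
      have e4 : 1 ≤ F.card := Finset.card_pos.mpr ⟨p, hp⟩
      omega
    have hPhiG : Phi G + (q.2 - q.1)^2 + (p.2 - p.1)^2 = Phi F := by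
      have e3 : Phi G + (q.2 - q.1)^2 = Phi (F.erase p) := by
        have := Finset.sum_erase_add (F.erase p) (fun r : ℕ × ℕ => (r.2 - r.1)^2) hqG
        simpa [Phi, hGdef] using this
      have e4 : Phi (F.erase p) + (p.2 - p.1)^2 = Phi F := by
        have := Finset.sum_erase_add F (fun r : ℕ × ℕ => (r.2 - r.1)^2) hp
        simpa [Phi] using this
      omega
    have hN1 : (p.2 - p.1)^2 ≤ n^2 := Nat.pow_le_pow_left (by omega) 2
    have hN2 : (q.2 - q.1)^2 ≤ n^2 := Nat.pow_le_pow_left (by omega) 2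
    have hPhiF : Phi F ≤ F.card * n^2 := phi_le hF
    have hPhiF' : Phi (insert P (insert Q G)) ≤ (insert P (insert Q G)).card * n^2 :=
      phi_le hF'v
    have hb1 : F.card * (2*n^2+1) = 2*(F.card*n^2) + F.card := by ring
    have hb2 : (insert P (insert Q G)).card * (2*n^2+1) =
        2*((insert P (insert Q G)).card * n^2) + (insert P (insert Q G)).card := by ring
    by_cases hQm : Q ∈ G
    · have eQ : insert Q G = G := Finset.insert_eq_self.mpr hQm
      by_cases hPm : P ∈ G
      · -- both present: two intervals disappear
        have eP : insert P (insert Q G) = G := by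
          rw [eQ]; exact Finset.insert_eq_self.mpr hPm
        have hc' : (insert P (insert Q G)).card = G.card := by rw [eP]
        have hΦ' : Phi (insert P (insert Q G)) = Phi G := by rw [Phi, eP]; rfl
        have hb3 : F.card * n^2 = (insert P (insert Q G)).card * n^2 + 2 * n^2 := by
          rw [hc', ← hcardG]; ring
        omega
      · -- P new, Q present
        have hc' : (insert P (insert Q G)).card = G.card + 1 := by
          rw [eQ, Finset.card_insert_of_notMem hPm]
        have hΦ' : Phi (insert P (insert Q G)) = (q.2 - p.1)^2 + Phi G := by
          rw [Phi, eQ, Finset.sum_insert hPm]; rfl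
        have hb3 : F.card * n^2 = (insert P (insert Q G)).card * n^2 + 1 * n^2 := by
          rw [hc', ← hcardG]; ring
        omega
    · have hΦQ : Phi (insert Q G) = (p.2 - q.1)^2 + Phi G := by
        rw [Phi, Finset.sum_insert hQm]; rfl
      have hcQ : (insert Q G).card = G.card + 1 := Finset.card_insert_of_notMem hQm
      by_cases hPm : P ∈ G
      · -- P present, Q new
        have hPmem : P ∈ insert Q G := Finset.mem_insert_of_mem hPm
        have eP : insert P (insert Q G) = insert Q G := Finset.insert_eq_self.mpr hPmem
        have hc' : (insert P (insert Q G)).card = G.card + 1 := by rw [eP, hcQ]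
        have hΦ' : Phi (insert P (insert Q G)) = (p.2 - q.1)^2 + Phi G := by
          rw [Phi, eP]; exact hΦQ
        have hb3 : F.card * n^2 = (insert P (insert Q G)).card * n^2 + 1 * n^2 := by
          rw [hc', ← hcardG]; ring
        omega
      · -- both new: the uncrossing strictly increases Phi
        have hPmem : P ∉ insert Q G := by
          simp only [Finset.mem_insert]
          push_neg
          exact ⟨hPQ, hPm⟩
        have hc' : (insert P (insert Q G)).card = G.card + 2 := by
          rw [Finset.card_insert_of_notMem hPmem, hcQ]
        have hΦ' : Phi (insert P (insert Q G)) = (q.2 - p.1)^2 + ((p.2 - q.1)^2 + Phi G) := by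
          rw [Phi, Finset.sum_insert hPmem]
          exact congrArg _ hΦQ
        have key : (p.2 - p.1)^2 + (q.2 - q.1)^2 < (q.2 - p.1)^2 + (p.2 - q.1)^2 := by
          have ea : p.2 - p.1 = (q.1 - p.1) + (p.2 - q.1) := by omega
          have eb : q.2 - q.1 = (p.2 - q.1) + (q.2 - p.2) := by omega
          have ec : q.2 - p.1 = (q.1 - p.1) + (p.2 - q.1) + (q.2 - p.2) := by omega
          rw [ea, eb, ec]
          exact sq_cross _ _ _ (by omega) (by omega)
        have hb3 : F.card * n^2 = (insert P (insert Q G)).card * n^2 := by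
          rw [hc', ← hcardG]
        omega

lemma main (n : ℕ) : ∀ (k : ℕ) (F : Finset (ℕ × ℕ)),
    F.card * (2*n^2+1) - Phi F ≤ k → Valid n ↑F →
    ∃ F' : Finset (ℕ × ℕ), Valid n ↑F' ∧ sep ↑F' = sep ↑F ∧
      ∀ p ∈ F', ∀ q ∈ F',
        (p.2 < q.1 ∨ q.2 < p.1) ∨ (p.1 ≤ q.1 ∧ q.2 ≤ p.2) ∨ (q.1 ≤ p.1 ∧ p.2 ≤ q.2) := by
  intro k
  induction k with
  | zero =>
    intro F hk hF
    by_cases hcr : ∃ p ∈ F, ∃ q ∈ F, p.1 < q.1 ∧ q.1 ≤ p.2 ∧ p.2 < q.2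
    · obtain ⟨p, hp, q, hq, h1, h2, h3⟩ := hcr
      obtain ⟨F', _, _, hdec⟩ := step F hF hp hq h1 h2 h3
      omega
    · push_neg at hcr
      refine ⟨F, hF, rfl, ?_⟩
      intro p hp q hq
      have c1 := hcr p hp q hq
      have c2 := hcr q hq p hp
      have b1 := hF p (by simpa using hp)
      have b2 := hF q (by simpa using hq)
      omega
  | succ k ih =>
    intro F hk hF
    by_cases hcr : ∃ p ∈ F, ∃ q ∈ F, p.1 < q.1 ∧ q.1 ≤ p.2 ∧ p.2 < q.2
    · obtain ⟨p, hp, q, hq, h1, h2, h3⟩ := hcr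
      obtain ⟨F', hv, hs, hdec⟩ := step F hF hp hq h1 h2 h3
      obtain ⟨F'', hv'', hs'', hl⟩ := ih F' (by omega) hv
      exact ⟨F'', hv'', hs''.trans hs, hl⟩
    · push_neg at hcr
      refine ⟨F, hF, rfl, ?_⟩
      intro p hp q hq
      have c1 := hcr p hp q hq
      have c2 := hcr q hq p hp
      have b1 := hF p (by simpa using hp)
      have b2 := hF q (by simpa using hq)
      omega

theorem laminar_realization (n : ℕ) (M : Set (ℕ × ℕ)) (hfin : M.Finite) (hM : Valid n M) :
    ∃ M' : Set (ℕ × ℕ), Valid n M' ∧ sep M' = sep M ∧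
      ∀ p ∈ M', ∀ q ∈ M',
        (p.2 < q.1 ∨ q.2 < p.1) ∨ (p.1 ≤ q.1 ∧ q.2 ≤ p.2) ∨ (q.1 ≤ p.1 ∧ p.2 ≤ q.2) := by
  have hco : (↑hfin.toFinset : Set (ℕ × ℕ)) = M := Set.Finite.coe_toFinset hfin
  obtain ⟨F', hv, hs, hl⟩ := main n
    (hfin.toFinset.card * (2*n^2+1) - Phi hfin.toFinset) hfin.toFinset le_rfl
    (by rwa [hco])
  refine ⟨↑F', hv, ?_, ?_⟩
  · rw [hs, hco]
  · intro p hp q hq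
    exact hl p (by simpa using hp) q (by simpa using hq)
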